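/- Let the data (a_1,…,a_n) with labels (y_1,…,y_n) be separable with margin μ > 0, and let R := max_{i∈[n]} ‖a_i‖. Consider the Batch Perceptron iterates started from θ̂₀ = 0 (with the convention θ̂_{t+1} = θ̂_t when S_t = ∅). Then there exists an iteration index t with 1 ≤ t ≤ n R²/μ² such that S_t = ∅, i.e., y_i a_iᵀ θ̂_t > 0 for all i ∈ [n]; in other words, Batch Perceptron solves the classification task after at most n R²/μ² iterations. -/

import Mathlib

open scoped RealInnerProductSpace BigOperators

set_option maxHeartbeats 1000000 in
theorem batch_perceptron_converges {d n : ℕ} (hn : 0 < n)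
    (a : Fin n → EuclideanSpace ℝ (Fin d)) (y : Fin n → ℝ)
    (hy : ∀ i, y i = 1 ∨ y i = -1)
    (μ R : ℝ) (hμ : 0 < μ)
    (θstar : EuclideanSpace ℝ (Fin d)) (hstar : ‖θstar‖ = 1)
    (hmargin : ∀ i, μ ≤ y i * ⟪a i, θstar⟫)
    (hR : IsGreatest (Set.range fun i => ‖a i‖) R)
    (θhat : ℕ → EuclideanSpace ℝ (Fin d))
    (h0 : θhat 0 = 0)
    (h1 : θhat 1 = θhat 0 + ((1 : ℝ) / (2 * n)) • ∑ i, y i • a i)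
    (hstep : ∀ t, 1 ≤ t →
      θhat (t + 1) = θhat t + ((1 : ℝ) / n) •
        ∑ i ∈ Finset.univ.filter (fun i => y i * ⟪a i, θhat t⟫ ≤ 0), y i • a i) :
    ∃ t : ℕ, 1 ≤ t ∧ (t : ℝ) ≤ n * R ^ 2 / μ ^ 2 ∧
      ∀ i, 0 < y i * ⟪a i, θhat t⟫ := by
  classical
  have hn' : (0 : ℝ) < n := by exact_mod_cast hn
  have hya : ∀ i, |y i| = 1 := fun i => by rcases hy i with h | h <;> rw [h] <;> norm_num
  have hRa : ∀ i, ‖a i‖ ≤ R := fun i => hR.2 ⟨i, rfl⟩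
  have hμa : ∀ i, μ ≤ ‖a i‖ := by
    intro i
    calc μ ≤ y i * ⟪a i, θstar⟫ := hmargin i
      _ ≤ |y i * ⟪a i, θstar⟫| := le_abs_self _
      _ = |⟪a i, θstar⟫| := by rw [abs_mul, hya, one_mul]
      _ ≤ ‖a i‖ * ‖θstar‖ := abs_real_inner_le_norm _ _
      _ = ‖a i‖ := by rw [hstar, mul_one]
  have hμR : μ ≤ R := le_trans (hμa ⟨0, hn⟩) (hRa _)
  have hR0 : (0 : ℝ) < R := lt_of_lt_of_le hμ hμR
  have hc1 : (1 : ℝ) ≤ R ^ 2 / μ ^ 2 := by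
    rw [le_div_iff₀ (by positivity)]
    nlinarith
  -- the mistake sets
  set Sf : ℕ → Finset (Fin n) :=
    fun t => Finset.univ.filter (fun i => y i * ⟪a i, θhat t⟫ ≤ 0) with hSf
  set s : ℕ → ℝ := fun t => (Sf t).card / n with hs
  have hs0 : ∀ t, 0 ≤ s t := fun t => by positivity
  have hs1 : ∀ t, s t ≤ 1 := by
    intro t
    rw [hs]
    simp only [div_le_one hn']
    have := Finset.card_filter_le (Finset.univ : Finset (Fin n))
      (fun i => y i * ⟪a i, θhat t⟫ ≤ 0)
    simp only [Finset.card_univ, Fintype.card_fin] at this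
    exact_mod_cast this
  set W : ℕ → ℝ := fun T => ∑ t ∈ Finset.range T, s (t + 1) with hW
  have hW0 : ∀ T, 0 ≤ W T := fun T => Finset.sum_nonneg fun t _ => hs0 _
  -- step identities
  have innerStep : ∀ t, 1 ≤ t → ⟪θhat (t + 1), θstar⟫
      = ⟪θhat t, θstar⟫ + (1 / n) * ∑ i ∈ Sf t, (y i * ⟪a i, θstar⟫) := by
    intro t ht
    rw [hstep t ht, inner_add_left, real_inner_smul_left, sum_inner]
    congr 2
    refine Finset.sum_congr rfl fun i _ => ?_
    rw [real_inner_smul_left]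
  -- lower bound on progress
  have I1 : ∀ T, μ / 2 + μ * W T ≤ ⟪θhat (T + 1), θstar⟫ := by
    intro T
    induction T with
    | zero =>
        simp only [hW, Finset.range_zero, Finset.sum_empty, mul_zero, add_zero]
        rw [h1, h0, zero_add, real_inner_smul_left, sum_inner]
        have hsum : (n : ℝ) * μ ≤ ∑ i : Fin n, ⟪y i • a i, θstar⟫ := by
          have : ∀ i ∈ Finset.univ, μ ≤ ⟪y i • a i, θstar⟫ := by
            intro i _
            rw [real_inner_smul_left]
            exact hmargin i
          calc (n : ℝ) * μ = ∑ _i : Fin n, μ := by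
                rw [Finset.sum_const, Finset.card_univ, Fintype.card_fin, nsmul_eq_mul]
            _ ≤ _ := Finset.sum_le_sum this
        calc μ / 2 = (1 / (2 * n)) * ((n : ℝ) * μ) := by field_simp
          _ ≤ _ := by
              apply mul_le_mul_of_nonneg_left hsum
              positivity
    | succ T ih =>
        have hT1 : 1 ≤ T + 1 := Nat.le_add_left 1 T
        rw [innerStep (T + 1) hT1]
        have hsum : ((Sf (T + 1)).card : ℝ) * μ ≤ ∑ i ∈ Sf (T + 1), (y i * ⟪a i, θstar⟫) := by
          calc ((Sf (T + 1)).card : ℝ) * μ = ∑ _i ∈ Sf (T + 1), μ := by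
                rw [Finset.sum_const, nsmul_eq_mul]
            _ ≤ _ := Finset.sum_le_sum fun i _ => hmargin i
        have hWs : W (T + 1) = W T + s (T + 1) := by
          rw [hW]; exact Finset.sum_range_succ _ _
        have : μ * s (T + 1) ≤ (1 / n) * ∑ i ∈ Sf (T + 1), (y i * ⟪a i, θstar⟫) := by
          have h2 : (1 / (n : ℝ)) * (((Sf (T + 1)).card : ℝ) * μ)
              ≤ (1 / n) * ∑ i ∈ Sf (T + 1), (y i * ⟪a i, θstar⟫) :=
            mul_le_mul_of_nonneg_left hsum (by positivity)
          calc μ * s (T + 1) = (1 / (n : ℝ)) * (((Sf (T + 1)).card : ℝ) * μ) := by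
                rw [hs]; field_simp
            _ ≤ _ := h2
        rw [hWs]
        nlinarith [ih]
  -- upper bound on norm squared
  have I2 : ∀ T, ‖θhat (T + 1)‖ ^ 2 ≤ R ^ 2 / 4 + R ^ 2 * W T := by
    intro T
    induction T with
    | zero =>
        simp only [hW, Finset.range_zero, Finset.sum_empty, mul_zero, add_zero]
        have hb : ‖θhat 1‖ ≤ R / 2 := by
          rw [h1, h0, zero_add, norm_smul]
          have : ‖∑ i : Fin n, y i • a i‖ ≤ (n : ℝ) * R := by
            calc ‖∑ i : Fin n, y i • a i‖ ≤ ∑ i : Fin n, ‖y i • a i‖ := norm_sum_le _ _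
              _ ≤ ∑ _i : Fin n, R := by
                  refine Finset.sum_le_sum fun i _ => ?_
                  rw [norm_smul, Real.norm_eq_abs, hya, one_mul]
                  exact hRa i
              _ = (n : ℝ) * R := by
                  rw [Finset.sum_const, Finset.card_univ, Fintype.card_fin, nsmul_eq_mul]
          calc ‖(1 : ℝ) / (2 * n)‖ * ‖∑ i : Fin n, y i • a i‖
              ≤ (1 / (2 * n)) * ((n : ℝ) * R) := by
                apply mul_le_mul (le_of_eq ?_) this (norm_nonneg _) (by positivity)
                rw [Real.norm_eq_abs, abs_of_pos (by positivity)]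
            _ = R / 2 := by field_simp
        nlinarith [norm_nonneg (θhat 1)]
    | succ T ih =>
        have hT1 : 1 ≤ T + 1 := Nat.le_add_left 1 T
        set g : EuclideanSpace ℝ (Fin d) := ((1 : ℝ) / n) • ∑ i ∈ Sf (T + 1), y i • a i with hg
        have hexp : ‖θhat (T + 1 + 1)‖ ^ 2
            = ‖θhat (T + 1)‖ ^ 2 + 2 * ⟪θhat (T + 1), g⟫ + ‖g‖ ^ 2 := by
          rw [hstep (T + 1) hT1]
          exact norm_add_sq_real _ _
        have hip : ⟪θhat (T + 1), g⟫ ≤ 0 := by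
          rw [hg, real_inner_smul_right, inner_sum]
          apply mul_nonpos_of_nonneg_of_nonpos (by positivity)
          apply Finset.sum_nonpos
          intro i hi
          rw [real_inner_smul_right, real_inner_comm]
          rw [hSf, Finset.mem_filter] at hi
          exact hi.2
        have hgn : ‖g‖ ≤ s (T + 1) * R := by
          rw [hg, norm_smul]
          have hb : ‖∑ i ∈ Sf (T + 1), y i • a i‖ ≤ ((Sf (T + 1)).card : ℝ) * R := by
            calc ‖∑ i ∈ Sf (T + 1), y i • a i‖ ≤ ∑ i ∈ Sf (T + 1), ‖y i • a i‖ :=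
                  norm_sum_le _ _
              _ ≤ ∑ _i ∈ Sf (T + 1), R := by
                  refine Finset.sum_le_sum fun i _ => ?_
                  rw [norm_smul, Real.norm_eq_abs, hya, one_mul]
                  exact hRa i
              _ = ((Sf (T + 1)).card : ℝ) * R := by rw [Finset.sum_const, nsmul_eq_mul]
          have hnn : ‖(1 : ℝ) / n‖ = 1 / n := by
            rw [Real.norm_eq_abs, abs_of_pos (by positivity)]
          calc ‖(1 : ℝ) / n‖ * ‖∑ i ∈ Sf (T + 1), y i • a i‖
              ≤ (1 / n) * (((Sf (T + 1)).card : ℝ) * R) := by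
                rw [hnn]
                exact mul_le_mul_of_nonneg_left hb (by positivity)
            _ = s (T + 1) * R := by rw [hs]; field_simp
        have hg2 : ‖g‖ ^ 2 ≤ s (T + 1) * R ^ 2 := by
          have h1' : ‖g‖ ^ 2 ≤ (s (T + 1) * R) ^ 2 := by
            apply pow_le_pow_left₀ (norm_nonneg _) hgn
          nlinarith [mul_nonneg (mul_nonneg (sub_nonneg.mpr (hs1 (T + 1)))
            (hs0 (T + 1))) (sq_nonneg R)]
        have hWs : W (T + 1) = W T + s (T + 1) := by
          rw [hW]; exact Finset.sum_range_succ _ _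
        rw [hexp, hWs]
        have hexpand : R ^ 2 * (W T + s (T + 1)) = R ^ 2 * W T + s (T + 1) * R ^ 2 := by
          ring
        rw [hexpand]
        linarith [ih, hip, hg2]
  -- Cauchy-Schwarz combination
  have key : ∀ T, μ ^ 2 * (1 / 2 + W T) ^ 2 ≤ R ^ 2 * (1 / 4 + W T) := by
    intro T
    have h1' : μ / 2 + μ * W T ≤ ‖θhat (T + 1)‖ := by
      calc μ / 2 + μ * W T ≤ ⟪θhat (T + 1), θstar⟫ := I1 T
        _ ≤ ‖θhat (T + 1)‖ * ‖θstar‖ := real_inner_le_norm _ _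
        _ = ‖θhat (T + 1)‖ := by rw [hstar, mul_one]
    have h0' : 0 ≤ μ / 2 + μ * W T := by
      have := hW0 T
      nlinarith
    have h2' : (μ / 2 + μ * W T) ^ 2 ≤ ‖θhat (T + 1)‖ ^ 2 := by
      apply pow_le_pow_left₀ h0' h1'
    have := I2 T
    nlinarith
  -- bound on the accumulated mistake mass
  have Wbound : ∀ T, W T ≤ R ^ 2 / μ ^ 2 - 3 / 4 := by
    intro T
    have hk := key T
    have hW' := hW0 T
    have hμ2 : (0 : ℝ) < μ ^ 2 := by positivity
    have hgoal : μ ^ 2 * W T ≤ R ^ 2 - 3 / 4 * μ ^ 2 := by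
      by_contra hcon
      push_neg at hcon
      have hx : 0 < W T := by nlinarith
      nlinarith [mul_pos (by linarith : (0:ℝ) < μ ^ 2 * W T - (R ^ 2 - 3 / 4 * μ ^ 2)) hx]
    rw [show R ^ 2 / μ ^ 2 - 3 / 4 = (R ^ 2 - 3 / 4 * μ ^ 2) / μ ^ 2 by
      field_simp]
    rw [le_div_iff₀ hμ2]
    nlinarith [hgoal]
  -- if all S_t nonempty up to T, then T/n ≤ W T
  have Wlow : ∀ T, (∀ t, 1 ≤ t → t ≤ T → (Sf t).Nonempty) → (T : ℝ) / n ≤ W T := by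
    intro T hne
    have : ∀ t ∈ Finset.range T, (1 : ℝ) / n ≤ s (t + 1) := by
      intro t ht
      rw [Finset.mem_range] at ht
      have hcard : 1 ≤ (Sf (t + 1)).card :=
        Finset.card_pos.mpr (hne (t + 1) (Nat.le_add_left 1 t) (by omega))
      rw [hs]
      have h1c : (1 : ℝ) ≤ (Sf (t + 1)).card := by exact_mod_cast hcard
      exact (div_le_div_iff_of_pos_right hn').mpr h1c
    calc (T : ℝ) / n = ∑ _t ∈ Finset.range T, (1 : ℝ) / n := by
          rw [Finset.sum_const, Finset.card_range, nsmul_eq_mul]; ring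
      _ ≤ W T := Finset.sum_le_sum this
  -- final assembly
  rcases Nat.lt_or_ge n 2 with hn1 | hn2
  · -- n = 1 : the very first iterate already works
    have hn1' : n = 1 := by omega
    subst hn1'
    refine ⟨1, le_refl _, ?_, ?_⟩
    · simp only [Nat.cast_one, one_mul]
      exact hc1
    · intro i
      have hi : i = 0 := Subsingleton.elim i 0
      subst hi
      rw [h1, h0, zero_add, Fin.sum_univ_one, real_inner_smul_right,
        real_inner_smul_right, real_inner_self_eq_norm_sq]
      have hy2 : y 0 * y 0 = 1 := by rcases hy 0 with h | h <;> rw [h] <;> norm_num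
      have ha0 : 0 < ‖a 0‖ := lt_of_lt_of_le hμ (hμa 0)
      have hrw : y 0 * ((1 : ℝ) / (2 * ((1 : ℕ) : ℝ)) * (y 0 * ‖a 0‖ ^ 2))
          = (y 0 * y 0) * (‖a 0‖ ^ 2 / 2) := by push_cast; ring
      rw [hrw, hy2, one_mul]
      exact div_pos (pow_pos ha0 2) two_pos
  · -- n ≥ 2
    set c := R ^ 2 / μ ^ 2 with hcdef
    set T := ⌈(n : ℝ) * c⌉₊ with hT
    have hP : ∃ t, 1 ≤ t ∧ t ≤ T ∧ Sf t = ∅ := by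
      by_contra hcon
      push_neg at hcon
      have hne : ∀ t, 1 ≤ t → t ≤ T → (Sf t).Nonempty := by
        intro t h1t h2t
        rcases Finset.eq_empty_or_nonempty (Sf t) with he | hne
        · exact absurd he (Finset.nonempty_iff_ne_empty.mp (hcon t h1t h2t))
        · exact hne
      have hlow := Wlow T hne
      have hup := Wbound T
      have hTc : (n : ℝ) * c ≤ T := Nat.le_ceil _
      have hdiv : c ≤ (T : ℝ) / n := by
        rw [le_div_iff₀ hn']
        linarith [hTc]
      linarith
    obtain ⟨t1, ht1, htT, hte⟩ := hP
    have hPex : ∃ t, 1 ≤ t ∧ Sf t = ∅ := ⟨t1, ht1, hte⟩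
    set t₀ := Nat.find hPex with ht₀
    obtain ⟨ht₀1, ht₀e⟩ := Nat.find_spec hPex
    refine ⟨t₀, ht₀1, ?_, ?_⟩
    · have hmin : ∀ t, 1 ≤ t → t ≤ t₀ - 1 → (Sf t).Nonempty := by
        intro t h1t h2t
        have hlt : t < t₀ := by omega
        have hnm := Nat.find_min hPex hlt
        rw [not_and_or] at hnm
        rcases hnm with h | h
        · omega
        · exact Finset.nonempty_iff_ne_empty.mpr h
      have hlow := Wlow (t₀ - 1) hmin
      have hup := Wbound (t₀ - 1)
      have hcast : ((t₀ - 1 : ℕ) : ℝ) = (t₀ : ℝ) - 1 := by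
        rw [Nat.cast_sub (show 1 ≤ t₀ from ht₀1), Nat.cast_one]
      rw [hcast] at hlow
      have hn2' : (2 : ℝ) ≤ n := by exact_mod_cast hn2
      have hstep' : (t₀ : ℝ) - 1 ≤ n * (c - 3 / 4) := by
        rw [div_le_iff₀ hn'] at hlow
        nlinarith [hlow, hup, hn']
      have hgoal2 : (n : ℝ) * R ^ 2 / μ ^ 2 = n * c := by rw [hcdef]; ring
      rw [hgoal2]
      nlinarith [hstep', hn2']
    · intro i
      by_contra hle
      push_neg at hle
      have hmem : i ∈ Sf t₀ := by
        rw [hSf]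
        simp only [Finset.mem_filter, Finset.mem_univ, true_and]
        exact hle
      rw [ht₀e] at hmem
      exact absurd hmem (Finset.notMem_empty i)
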